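/- arXiv:1706.00350 — 2 statements merged into one kernel-verified Lean document; each statement's English description precedes it below -/
import Mathlib

section
/- Let N, M, D be integers with 2 ≤ M < N and D ≥ 1, let τ* ∈ (0,1) be the unique solution of H_1(τ) = H_2(τ) in (0,1), and define g(x) = x(H_1(x)+1)/(H_2(x)+1). For any initial value x₀ ∈ (1-((N-1)/(N-1+D))^{1/D}, 1), the sequence defined by x_{n+1} = g(x_n) converges to τ*. -/
open Finset Set

noncomputable def f1 (N M : ℕ) (τ : ℝ) : ℝ :=
  ∑ i ∈ range M, ((N-1).choose i : ℝ) * τ^i * (1-τ)^(N-1-i)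

noncomputable def f2 (N M : ℕ) (τ : ℝ) : ℝ :=
  ∑ i ∈ range M, (i : ℝ) * ((N-1).choose i : ℝ) * τ^i * (1-τ)^(N-1-i)

noncomputable def H1 (N M : ℕ) (τ : ℝ) : ℝ := f2 N M τ / f1 N M τ

noncomputable def H2 (N D : ℕ) (τ : ℝ) : ℝ :=
  τ * ((N:ℝ) + (D:ℝ) - 1 - (D:ℝ) / (1 - (1-τ)^D))

noncomputable def g (N M D : ℕ) (x : ℝ) : ℝ :=
  x * (H1 N M x + 1) / (H2 N D x + 1)

/-! Auxiliary definitions -/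

noncomputable def Tq (D : ℕ) (q : ℝ) : ℝ := ∑ j ∈ range D, q^j
noncomputable def Uq (N D : ℕ) (q : ℝ) : ℝ := ∑ j ∈ range D, ((N:ℝ)+j) * q^j

/-- key combination whose sign is the sign of `H1 - H2`. -/
noncomputable def kfun (N M D : ℕ) (x : ℝ) : ℝ :=
  (f1 N M x + f2 N M x) * Tq D (1-x) - x * f1 N M x * Uq N D (1-x)

noncomputable def P1 (N M : ℕ) (x : ℝ) : ℝ :=
  ∑ i ∈ range M, ((N-1).choose i : ℝ) * x^i * (1-x)^(M-1-i)
noncomputable def P2 (N M : ℕ) (x : ℝ) : ℝ :=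
  ∑ i ∈ range M, (i : ℝ) * ((N-1).choose i : ℝ) * x^i * (1-x)^(M-1-i)
noncomputable def kk (N M D : ℕ) (x : ℝ) : ℝ :=
  (P1 N M x + P2 N M x) * Tq D (1-x) - x * P1 N M x * Uq N D (1-x)

/-! Basic sum identities -/

lemma Tq_geom (D : ℕ) (q : ℝ) : (1-q) * Tq D q = 1 - q^D := by
  have := geom_sum_mul q D
  unfold Tq
  nlinarith [this]

lemma Uq_id (N D : ℕ) (q : ℝ) :
    (1-q) * Uq N D q = (N:ℝ) - 1 + Tq D q - ((N:ℝ)+D-1)*q^D := by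
  have hV : (1-q) * (∑ j ∈ range D, ((j:ℝ)+1) * q^j) = Tq D q - D * q^D := by
    have h1 : q * (∑ j ∈ range D, ((j:ℝ)+1) * q^j) = ∑ j ∈ range D, ((j:ℝ)+1) * q^(j+1) := by
      rw [Finset.mul_sum]; exact Finset.sum_congr rfl fun j _ => by ring
    have h2 : ∑ j ∈ range D, ((j:ℝ)+1) * q^(j+1)
        = (∑ j ∈ range D, (j:ℝ) * q^j) + D * q^D - 0 := by
      clear h1
      induction D with
      | zero => simp
      | succ n ih =>
        rw [Finset.sum_range_succ, ih, Finset.sum_range_succ]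
        push_cast; ring
    have h3 : (∑ j ∈ range D, ((j:ℝ)+1) * q^j) = (∑ j ∈ range D, (j:ℝ) * q^j) + Tq D q := by
      unfold Tq; rw [← Finset.sum_add_distrib]; exact Finset.sum_congr rfl fun j _ => by ring
    rw [sub_mul, one_mul, h1, h2, h3]; ring
  have hU : Uq N D q = ((N:ℝ)-1) * Tq D q + (∑ j ∈ range D, ((j:ℝ)+1) * q^j) := by
    unfold Uq Tq; rw [Finset.mul_sum, ← Finset.sum_add_distrib]
    exact Finset.sum_congr rfl fun j _ => by ring
  have hg := Tq_geom D q
  rw [hU, mul_add, hV]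
  nlinarith [hg]

lemma Tq_pos (D : ℕ) (hD : 1 ≤ D) (q : ℝ) (hq : 0 ≤ q) : 0 < Tq D q := by
  unfold Tq
  apply Finset.sum_pos' (fun j _ => pow_nonneg hq j)
  exact ⟨0, Finset.mem_range.2 hD, by norm_num⟩

lemma Uq_pos (N D : ℕ) (hN : 1 ≤ N) (hD : 1 ≤ D) (q : ℝ) (hq : 0 ≤ q) : 0 < Uq N D q := by
  unfold Uq
  apply Finset.sum_pos' (fun j _ => by positivity)
  refine ⟨0, Finset.mem_range.2 hD, ?_⟩
  simp only [pow_zero, mul_one, Nat.cast_zero, add_zero]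
  exact_mod_cast hN

lemma f1_pos (N M : ℕ) (hM : 1 ≤ M) (hMN : M < N) (x : ℝ) (hx0 : 0 < x) (hx1 : x < 1) :
    0 < f1 N M x := by
  have hx2 : (0:ℝ) ≤ 1 - x := by linarith
  unfold f1
  apply Finset.sum_pos' (fun i _ => by positivity)
  refine ⟨0, Finset.mem_range.2 hM, ?_⟩
  simp only [Nat.choose_zero_right, Nat.cast_one, pow_zero, one_mul, Nat.sub_zero, mul_one]
  have : (0:ℝ) < 1 - x := by linarith
  positivity

lemma f2_pos (N M : ℕ) (hM : 2 ≤ M) (hMN : M < N) (x : ℝ) (hx0 : 0 < x) (hx1 : x < 1) :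
    0 < f2 N M x := by
  have hx2 : (0:ℝ) ≤ 1 - x := by linarith
  unfold f2
  apply Finset.sum_pos' (fun i _ => by positivity)
  refine ⟨1, Finset.mem_range.2 hM, ?_⟩
  have h1 : 0 < (N-1).choose 1 := Nat.choose_pos (by omega)
  have h2 : (0:ℝ) < 1 - x := by linarith
  have : (0:ℝ) < ((N-1).choose 1 : ℝ) := by exact_mod_cast h1
  positivity

/-! H2 and g identities -/

lemma one_sub_pow (D : ℕ) (x : ℝ) : 1 - (1-x)^D = x * Tq D (1-x) := by
  have := Tq_geom D (1-x)
  linarith [this]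

lemma H2_id (N D : ℕ) (hD : 1 ≤ D) (x : ℝ) (hx0 : 0 < x) (hx1 : x ≤ 1) :
    H2 N D x + 1 = x * Uq N D (1-x) / Tq D (1-x) := by
  have hT : 0 < Tq D (1-x) := Tq_pos D hD _ (by linarith)
  have hsub : 1 - (1-x)^D = x * Tq D (1-x) := one_sub_pow D x
  have hU : x * Uq N D (1-x) = (N:ℝ) - 1 + Tq D (1-x) - ((N:ℝ)+D-1)*(1-x)^D := by
    linear_combination Uq_id N D (1-x)
  have hTg : x * Tq D (1-x) = 1 - (1-x)^D := by linear_combination Tq_geom D (1-x)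
  have key : x*((N:ℝ)+(D:ℝ)-1)*Tq D (1-x) - (D:ℝ) + Tq D (1-x) = x * Uq N D (1-x) := by
    linear_combination ((N:ℝ)+(D:ℝ)-1) * hTg - hU
  unfold H2
  rw [hsub, eq_div_iff hT.ne']
  have hxT : x * Tq D (1-x) ≠ 0 := by positivity
  field_simp
  linear_combination key

lemma g_id (N M D : ℕ) (hM : 1 ≤ M) (hMN : M < N) (hD : 1 ≤ D) (x : ℝ)
    (hx0 : 0 < x) (hx1 : x < 1) :
    g N M D x = (f1 N M x + f2 N M x) * Tq D (1-x) / (f1 N M x * Uq N D (1-x)) := by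
  have hT : 0 < Tq D (1-x) := Tq_pos D hD _ (by linarith)
  have hU : 0 < Uq N D (1-x) := Uq_pos N D (by omega) hD _ (by linarith)
  have hf1 : 0 < f1 N M x := f1_pos N M hM hMN x hx0 hx1
  unfold g H1
  rw [H2_id N D hD x hx0 (le_of_lt hx1)]
  field_simp
  ring

lemma sub_id (N M D : ℕ) (hM : 1 ≤ M) (hMN : M < N) (hD : 1 ≤ D) (x : ℝ)
    (hx0 : 0 < x) (hx1 : x < 1) :
    H1 N M x - H2 N D x = kfun N M D x / (f1 N M x * Tq D (1-x)) := by
  have hT : 0 < Tq D (1-x) := Tq_pos D hD _ (by linarith)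
  have hf1 : 0 < f1 N M x := f1_pos N M hM hMN x hx0 hx1
  have h2 := H2_id N D hD x hx0 (le_of_lt hx1)
  unfold H1 kfun
  have : H2 N D x = x * Uq N D (1-x) / Tq D (1-x) - 1 := by linarith
  rw [this]
  field_simp
  ring

lemma gsub_id (N M D : ℕ) (hM : 1 ≤ M) (hMN : M < N) (hD : 1 ≤ D) (x : ℝ)
    (hx0 : 0 < x) (hx1 : x < 1) :
    g N M D x - x = kfun N M D x / (f1 N M x * Uq N D (1-x)) := by
  have hU : 0 < Uq N D (1-x) := Uq_pos N D (by omega) hD _ (by linarith)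
  have hf1 : 0 < f1 N M x := f1_pos N M hM hMN x hx0 hx1
  rw [g_id N M D hM hMN hD x hx0 hx1]
  unfold kfun
  field_simp

/-! Chebyshev-type sum inequalities -/

lemma cheb_expand (n : ℕ) (a : ℕ → ℝ) (r : ℝ) :
    ∑ i ∈ range n, ∑ j ∈ range n, a i * a j * ((i:ℝ) - j) * (r^i - r^j)
      = 2 * ((∑ i ∈ range n, (i:ℝ) * r^i * a i) * (∑ j ∈ range n, a j)
        - (∑ i ∈ range n, (i:ℝ) * a i) * (∑ j ∈ range n, r^j * a j)) := by
  have e1 : (∑ i ∈ range n, (i:ℝ) * r^i * a i) * (∑ j ∈ range n, a j)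
      = ∑ i ∈ range n, ∑ j ∈ range n, ((i:ℝ) * r^i * a i) * a j :=
    Finset.sum_mul_sum _ _ _ _
  have e2 : (∑ i ∈ range n, (i:ℝ) * a i) * (∑ j ∈ range n, r^j * a j)
      = ∑ i ∈ range n, ∑ j ∈ range n, ((i:ℝ) * a i) * (r^j * a j) :=
    Finset.sum_mul_sum _ _ _ _
  have e3 : (∑ i ∈ range n, a i) * (∑ j ∈ range n, (j:ℝ) * r^j * a j)
      = ∑ i ∈ range n, ∑ j ∈ range n, a i * ((j:ℝ) * r^j * a j) :=
    Finset.sum_mul_sum _ _ _ _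
  have e4 : (∑ i ∈ range n, r^i * a i) * (∑ j ∈ range n, (j:ℝ) * a j)
      = ∑ i ∈ range n, ∑ j ∈ range n, (r^i * a i) * ((j:ℝ) * a j) :=
    Finset.sum_mul_sum _ _ _ _
  have comb : ∑ i ∈ range n, ∑ j ∈ range n, a i * a j * ((i:ℝ) - j) * (r^i - r^j)
      = (∑ i ∈ range n, ∑ j ∈ range n, ((i:ℝ) * r^i * a i) * a j)
        + (∑ i ∈ range n, ∑ j ∈ range n, a i * ((j:ℝ) * r^j * a j))
        - ((∑ i ∈ range n, ∑ j ∈ range n, ((i:ℝ) * a i) * (r^j * a j))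
          + (∑ i ∈ range n, ∑ j ∈ range n, (r^i * a i) * ((j:ℝ) * a j))) := by
    rw [← Finset.sum_add_distrib, ← Finset.sum_add_distrib, ← Finset.sum_sub_distrib]
    refine Finset.sum_congr rfl fun i _ => ?_
    rw [← Finset.sum_add_distrib, ← Finset.sum_add_distrib, ← Finset.sum_sub_distrib]
    exact Finset.sum_congr rfl fun j _ => by ring
  rw [comb, ← e1, ← e2, ← e3, ← e4, mul_comm (∑ i ∈ range n, a i), mul_comm (∑ i ∈ range n, r^i * a i)]
  ring

lemma cheb_le (n : ℕ) (a : ℕ → ℝ) (ha : ∀ i ∈ range n, 0 ≤ a i) (r : ℝ) (hr : 1 ≤ r) :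
    (∑ i ∈ range n, (i:ℝ) * a i) * (∑ j ∈ range n, r^j * a j)
      ≤ (∑ i ∈ range n, (i:ℝ) * r^i * a i) * (∑ j ∈ range n, a j) := by
  have hE : 0 ≤ ∑ i ∈ range n, ∑ j ∈ range n, a i * a j * ((i:ℝ) - j) * (r^i - r^j) := by
    apply Finset.sum_nonneg; intro i hi
    apply Finset.sum_nonneg; intro j hj
    have key : 0 ≤ ((i:ℝ) - j) * (r^i - r^j) := by
      rcases le_total i j with h | h
      · have h1 : (i:ℝ) ≤ j := by exact_mod_cast h
        have h2 : r^i ≤ r^j := pow_le_pow_right₀ hr h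
        nlinarith [mul_nonneg (by linarith : (0:ℝ) ≤ (j:ℝ)-i) (by linarith : (0:ℝ) ≤ r^j - r^i)]
      · have h1 : (j:ℝ) ≤ i := by exact_mod_cast h
        have h2 : r^j ≤ r^i := pow_le_pow_right₀ hr h
        nlinarith [mul_nonneg (by linarith : (0:ℝ) ≤ (i:ℝ)-j) (by linarith : (0:ℝ) ≤ r^i - r^j)]
    calc (0:ℝ) ≤ (a i * a j) * (((i:ℝ) - j) * (r^i - r^j)) :=
            mul_nonneg (mul_nonneg (ha i hi) (ha j hj)) key
      _ = a i * a j * ((i:ℝ) - j) * (r^i - r^j) := by ring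
  rw [cheb_expand] at hE
  linarith

lemma cheb_lt (n : ℕ) (hn : 2 ≤ n) (a : ℕ → ℝ) (ha : ∀ i ∈ range n, 0 < a i)
    (r : ℝ) (hr : 1 < r) :
    (∑ i ∈ range n, (i:ℝ) * a i) * (∑ j ∈ range n, r^j * a j)
      < (∑ i ∈ range n, (i:ℝ) * r^i * a i) * (∑ j ∈ range n, a j) := by
  have hE : 0 < ∑ i ∈ range n, ∑ j ∈ range n, a i * a j * ((i:ℝ) - j) * (r^i - r^j) := by
    rw [← Finset.sum_product']
    apply Finset.sum_pos'
    · rintro ⟨i, j⟩ hij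
      rw [Finset.mem_product] at hij
      have key : 0 ≤ ((i:ℝ) - j) * (r^i - r^j) := by
        rcases le_total i j with h | h
        · have h1 : (i:ℝ) ≤ j := by exact_mod_cast h
          have h2 : r^i ≤ r^j := pow_le_pow_right₀ hr.le h
          nlinarith [mul_nonneg (by linarith : (0:ℝ) ≤ (j:ℝ)-i) (by linarith : (0:ℝ) ≤ r^j - r^i)]
        · have h1 : (j:ℝ) ≤ i := by exact_mod_cast h
          have h2 : r^j ≤ r^i := pow_le_pow_right₀ hr.le h
          nlinarith [mul_nonneg (by linarith : (0:ℝ) ≤ (i:ℝ)-j) (by linarith : (0:ℝ) ≤ r^i - r^j)]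
      calc (0:ℝ) ≤ (a i * a j) * (((i:ℝ) - j) * (r^i - r^j)) :=
              mul_nonneg (mul_nonneg (ha i hij.1).le (ha j hij.2).le) key
        _ = a (i,j).1 * a (i,j).2 * ((((i,j).1:ℕ):ℝ) - (((i,j).2:ℕ):ℝ)) * (r^(i,j).1 - r^(i,j).2) := by ring
    · refine ⟨(1, 0), Finset.mem_product.2 ⟨Finset.mem_range.2 (by omega), Finset.mem_range.2 (by omega)⟩, ?_⟩
      have h0 := ha 0 (Finset.mem_range.2 (by omega))
      have h1 := ha 1 (Finset.mem_range.2 (by omega))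
      simp only [pow_one, pow_zero, Nat.cast_one, Nat.cast_zero]
      nlinarith [mul_pos (mul_pos h1 h0) (sub_pos.2 hr)]
  rw [cheb_expand] at hE
  linarith

/-! factor out (1-x)^(N-M) -/

lemma f1_eq (N M : ℕ) (hMN : M < N) (x : ℝ) : f1 N M x = (1-x)^(N-M) * P1 N M x := by
  unfold f1 P1
  rw [Finset.mul_sum]
  refine Finset.sum_congr rfl fun i hi => ?_
  rw [Finset.mem_range] at hi
  have h : N - 1 - i = (N-M) + (M-1-i) := by omega
  rw [h, pow_add]; ring

lemma f2_eq (N M : ℕ) (hMN : M < N) (x : ℝ) : f2 N M x = (1-x)^(N-M) * P2 N M x := by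
  unfold f2 P2
  rw [Finset.mul_sum]
  refine Finset.sum_congr rfl fun i hi => ?_
  rw [Finset.mem_range] at hi
  have h : N - 1 - i = (N-M) + (M-1-i) := by omega
  rw [h, pow_add]; ring

lemma kfun_eq (N M D : ℕ) (hMN : M < N) (x : ℝ) :
    kfun N M D x = (1-x)^(N-M) * kk N M D x := by
  unfold kfun kk
  rw [f1_eq N M hMN, f2_eq N M hMN]; ring

lemma P1_one (N M : ℕ) (hM : 1 ≤ M) : P1 N M 1 = ((N-1).choose (M-1) : ℝ) := by
  unfold P1
  rw [Finset.sum_eq_single_of_mem (M-1) (Finset.mem_range.2 (by omega))]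
  · norm_num
  · intro i hi hne
    rw [Finset.mem_range] at hi
    have h : M - 1 - i ≠ 0 := by omega
    simp [zero_pow h]

lemma P2_one (N M : ℕ) (hM : 1 ≤ M) : P2 N M 1 = ((M:ℝ)-1) * ((N-1).choose (M-1) : ℝ) := by
  unfold P2
  rw [Finset.sum_eq_single_of_mem (M-1) (Finset.mem_range.2 (by omega))]
  · have : ((M-1 : ℕ) : ℝ) = (M:ℝ) - 1 := by
      have : 1 ≤ M := hM
      push_cast [Nat.cast_sub this]
      ring
    norm_num [this]
  · intro i hi hne
    rw [Finset.mem_range] at hi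
    have h : M - 1 - i ≠ 0 := by omega
    simp [zero_pow h]

lemma Tq_zero (D : ℕ) (hD : 1 ≤ D) : Tq D 0 = 1 := by
  unfold Tq
  rw [Finset.sum_eq_single_of_mem 0 (Finset.mem_range.2 (by omega))]
  · norm_num
  · intro i _ hne; simp [zero_pow hne]

lemma Uq_zero (N D : ℕ) (hD : 1 ≤ D) : Uq N D 0 = (N:ℝ) := by
  unfold Uq
  rw [Finset.sum_eq_single_of_mem 0 (Finset.mem_range.2 (by omega))]
  · norm_num
  · intro i _ hne; simp [zero_pow hne]

lemma kk_one_neg (N M D : ℕ) (hM : 2 ≤ M) (hMN : M < N) (hD : 1 ≤ D) :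
    kk N M D 1 < 0 := by
  have hC : (0:ℝ) < ((N-1).choose (M-1) : ℝ) := by
    exact_mod_cast Nat.choose_pos (by omega : M - 1 ≤ N - 1)
  have hMNlt : (M:ℝ) < N := by exact_mod_cast hMN
  unfold kk
  rw [P1_one N M (by omega), P2_one N M (by omega)]
  norm_num [Tq_zero D hD, Uq_zero N D hD]
  nlinarith

/-! strict monotonicity of f2/f1 -/

lemma f_mono (N M : ℕ) (hM : 2 ≤ M) (hMN : M < N) {x y : ℝ}
    (hx : 0 < x) (hxy : x < y) (hy : y < 1) :
    f2 N M x * f1 N M y < f2 N M y * f1 N M x := by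
  have hx1 : (0:ℝ) < 1 - x := by linarith
  have hy1 : (0:ℝ) < 1 - y := by linarith
  have hy0 : (0:ℝ) < y := by linarith
  set a : ℕ → ℝ := fun i => ((N-1).choose i : ℝ) * x^i * (1-x)^(N-1-i) with ha_def
  set r : ℝ := (y*(1-x))/(x*(1-y)) with hr_def
  set c : ℝ := ((1-y)/(1-x))^(N-1) with hc_def
  have hc : 0 < c := by positivity
  have ha : ∀ i ∈ range M, 0 < a i := by
    intro i hi
    have : (0:ℝ) < ((N-1).choose i : ℝ) := by
      rw [Finset.mem_range] at hi
      exact_mod_cast Nat.choose_pos (by omega : i ≤ N - 1)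
    simp only [ha_def]
    positivity
  have hr : 1 < r := by
    rw [hr_def, lt_div_iff₀ (by positivity)]
    nlinarith
  have hkey : ∀ i ∈ range M,
      ((N-1).choose i : ℝ) * y^i * (1-y)^(N-1-i) = c * (r^i * a i) := by
    intro i hi
    rw [Finset.mem_range] at hi
    have e1 : (1-x)^(N-1) = (1-x)^i * (1-x)^(N-1-i) := by
      rw [← pow_add]; congr 1; omega
    have e2 : (1-y)^(N-1) = (1-y)^i * (1-y)^(N-1-i) := by
      rw [← pow_add]; congr 1; omega
    simp only [ha_def, hr_def, hc_def]
    rw [div_pow, div_pow, mul_pow, mul_pow]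
    field_simp
    rw [e1, e2]
    ring
  have h1 : f1 N M y = c * ∑ i ∈ range M, r^i * a i := by
    unfold f1
    rw [Finset.mul_sum]
    exact Finset.sum_congr rfl fun i hi => by rw [hkey i hi]
  have h2 : f2 N M y = c * ∑ i ∈ range M, (i:ℝ) * r^i * a i := by
    unfold f2
    rw [Finset.mul_sum]
    refine Finset.sum_congr rfl fun i hi => ?_
    have := hkey i hi
    calc (i:ℝ) * ((N-1).choose i : ℝ) * y^i * (1-y)^(N-1-i)
        = (i:ℝ) * (((N-1).choose i : ℝ) * y^i * (1-y)^(N-1-i)) := by ring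
      _ = (i:ℝ) * (c * (r^i * a i)) := by rw [this]
      _ = c * ((i:ℝ) * r^i * a i) := by ring
  have h3 : f1 N M x = ∑ i ∈ range M, a i := by
    unfold f1; exact Finset.sum_congr rfl fun i _ => by simp only [ha_def]
  have h4 : f2 N M x = ∑ i ∈ range M, (i:ℝ) * a i := by
    unfold f2
    refine Finset.sum_congr rfl fun i _ => ?_
    simp only [ha_def]; ring
  have hcheb := cheb_lt M hM a ha r hr
  rw [h1, h2, h3, h4]
  calc (∑ i ∈ range M, (i:ℝ) * a i) * (c * ∑ i ∈ range M, r^i * a i)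
      = c * ((∑ i ∈ range M, (i:ℝ) * a i) * (∑ j ∈ range M, r^j * a j)) := by ring
    _ < c * ((∑ i ∈ range M, (i:ℝ) * r^i * a i) * (∑ j ∈ range M, a j)) :=
        (mul_lt_mul_iff_right₀ hc).2 hcheb
    _ = c * (∑ i ∈ range M, (i:ℝ) * r^i * a i) * (∑ i ∈ range M, a i) := by ring

/-! monotonicity of T/U -/

lemma TU_mono (N D : ℕ) (hD : 1 ≤ D) {x y : ℝ}
    (hx : 0 < x) (hxy : x ≤ y) (hy : y < 1) :
    Tq D (1-x) * Uq N D (1-y) ≤ Tq D (1-y) * Uq N D (1-x) := by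
  have hq1 : (0:ℝ) < 1 - y := by linarith
  have hq2 : (0:ℝ) < 1 - x := by linarith
  have hq12 : 1 - y ≤ 1 - x := by linarith
  set q1 : ℝ := 1 - y
  set q2 : ℝ := 1 - x
  set b : ℕ → ℝ := fun i => q1^i with hb_def
  set r : ℝ := q2/q1 with hr_def
  have hr : 1 ≤ r := (one_le_div hq1).2 hq12
  have hb : ∀ i ∈ range D, 0 ≤ b i := fun i _ => by positivity
  have hkey : ∀ i : ℕ, q2^i = r^i * b i := by
    intro i
    simp only [hb_def, hr_def, div_pow]
    field_simp
  have hUT : ∀ q : ℝ, Uq N D q = (N:ℝ) * Tq D q + ∑ j ∈ range D, (j:ℝ) * q^j := by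
    intro q
    unfold Uq Tq
    rw [Finset.mul_sum, ← Finset.sum_add_distrib]
    exact Finset.sum_congr rfl fun j _ => by ring
  have hT2 : Tq D q2 = ∑ i ∈ range D, r^i * b i :=
    Finset.sum_congr rfl fun i _ => hkey i
  have hW2 : ∑ j ∈ range D, (j:ℝ) * q2^j = ∑ i ∈ range D, (i:ℝ) * r^i * b i := by
    refine Finset.sum_congr rfl fun i _ => ?_
    rw [hkey i]; ring
  have hW1 : ∑ j ∈ range D, (j:ℝ) * q1^j = ∑ i ∈ range D, (i:ℝ) * b i :=
    Finset.sum_congr rfl fun i _ => rfl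
  have hT1 : Tq D q1 = ∑ i ∈ range D, b i := Finset.sum_congr rfl fun i _ => rfl
  have hcheb := cheb_le D b hb r hr
  rw [hUT q1, hUT q2]
  have hkey2 : Tq D q2 * (∑ j ∈ range D, (j:ℝ) * q1^j)
      ≤ Tq D q1 * (∑ j ∈ range D, (j:ℝ) * q2^j) := by
    rw [hT2, hW1, hT1, hW2]
    calc (∑ i ∈ range D, r^i * b i) * (∑ i ∈ range D, (i:ℝ) * b i)
        = (∑ i ∈ range D, (i:ℝ) * b i) * (∑ j ∈ range D, r^j * b j) := by ring
      _ ≤ (∑ i ∈ range D, (i:ℝ) * r^i * b i) * (∑ j ∈ range D, b j) := hcheb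
      _ = (∑ i ∈ range D, b i) * (∑ i ∈ range D, (i:ℝ) * r^i * b i) := by ring
  nlinarith [hkey2]

/-! strict monotonicity of g on (0,1) -/

lemma g_mono (N M D : ℕ) (hM : 2 ≤ M) (hMN : M < N) (hD : 1 ≤ D) {x y : ℝ}
    (hx : 0 < x) (hxy : x < y) (hy : y < 1) :
    g N M D x < g N M D y := by
  have hy0 : (0:ℝ) < y := by linarith
  have hx1 : x < 1 := by linarith
  rw [g_id N M D (by omega) hMN hD x hx hx1, g_id N M D (by omega) hMN hD y hy0 hy]
  have hf1x := f1_pos N M (by omega) hMN x hx hx1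
  have hf1y := f1_pos N M (by omega) hMN y hy0 hy
  have hf2x := f2_pos N M hM hMN x hx hx1
  have hf2y := f2_pos N M hM hMN y hy0 hy
  have hTx := Tq_pos D hD (1-x) (by linarith)
  have hTy := Tq_pos D hD (1-y) (by linarith)
  have hUx := Uq_pos N D (by omega) hD (1-x) (by linarith)
  have hUy := Uq_pos N D (by omega) hD (1-y) (by linarith)
  rw [div_lt_div_iff₀ (by positivity) (by positivity)]
  have hf := f_mono N M hM hMN hx hxy hy
  have hTU := TU_mono N D hD hx hxy.le hy
  calc (f1 N M x + f2 N M x) * Tq D (1-x) * (f1 N M y * Uq N D (1-y))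
      = ((f1 N M x + f2 N M x) * f1 N M y) * (Tq D (1-x) * Uq N D (1-y)) := by ring
    _ < ((f1 N M y + f2 N M y) * f1 N M x) * (Tq D (1-x) * Uq N D (1-y)) := by
        apply mul_lt_mul_of_pos_right _ (by positivity)
        nlinarith
    _ ≤ ((f1 N M y + f2 N M y) * f1 N M x) * (Tq D (1-y) * Uq N D (1-x)) := by
        apply mul_le_mul_of_nonneg_left hTU (by positivity)
    _ = (f1 N M y + f2 N M y) * Tq D (1-y) * (f1 N M x * Uq N D (1-x)) := by ring

lemma g_mono_le (N M D : ℕ) (hM : 2 ≤ M) (hMN : M < N) (hD : 1 ≤ D) {x y : ℝ}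
    (hx : 0 < x) (hxy : x ≤ y) (hy : y < 1) :
    g N M D x ≤ g N M D y := by
  rcases eq_or_lt_of_le hxy with h | h
  · rw [h]
  · exact (g_mono N M D hM hMN hD hx h hy).le

/-! continuity -/

lemma cont_f1 (N M : ℕ) : Continuous (f1 N M) := by
  unfold f1
  exact continuous_finset_sum _ fun i _ => by fun_prop

lemma cont_f2 (N M : ℕ) : Continuous (f2 N M) := by
  unfold f2
  exact continuous_finset_sum _ fun i _ => by fun_prop

lemma cont_P1 (N M : ℕ) : Continuous (P1 N M) := by
  unfold P1
  exact continuous_finset_sum _ fun i _ => by fun_prop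

lemma cont_P2 (N M : ℕ) : Continuous (P2 N M) := by
  unfold P2
  exact continuous_finset_sum _ fun i _ => by fun_prop

lemma cont_Tq (D : ℕ) : Continuous (fun x : ℝ => Tq D (1-x)) := by
  unfold Tq
  exact continuous_finset_sum _ fun i _ => by fun_prop

lemma cont_Uq (N D : ℕ) : Continuous (fun x : ℝ => Uq N D (1-x)) := by
  unfold Uq
  exact continuous_finset_sum _ fun i _ => by fun_prop

lemma cont_kfun (N M D : ℕ) : Continuous (kfun N M D) := by
  unfold kfun
  exact (((cont_f1 N M).add (cont_f2 N M)).mul (cont_Tq D)).sub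
    (((continuous_id.mul (cont_f1 N M))).mul (cont_Uq N D))

lemma cont_kk (N M D : ℕ) : Continuous (kk N M D) := by
  unfold kk
  exact (((cont_P1 N M).add (cont_P2 N M)).mul (cont_Tq D)).sub
    (((continuous_id.mul (cont_P1 N M))).mul (cont_Uq N D))

/-! generic IVT sign lemmas -/

lemma pos_of_no_zero (k : ℝ → ℝ) (hc : Continuous k) (a z : ℝ) (haz : a ≤ z)
    (hka : 0 < k a) (hno : ∀ c ∈ Icc a z, k c ≠ 0) : 0 < k z := by
  by_contra h
  push_neg at h
  have hz : k z < 0 := lt_of_le_of_ne h (hno z ⟨haz, le_refl z⟩)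
  have hsub : Ioo (k z) (k a) ⊆ k '' Ioo a z :=
    intermediate_value_Ioo' haz hc.continuousOn
  obtain ⟨c, hc1, hc2⟩ := hsub ⟨hz, hka⟩
  exact hno c ⟨hc1.1.le, hc1.2.le⟩ hc2

lemma neg_of_no_zero (k : ℝ → ℝ) (hc : Continuous k) (z b : ℝ) (hzb : z ≤ b)
    (hkb : k b < 0) (hno : ∀ c ∈ Icc z b, k c ≠ 0) : k z < 0 := by
  by_contra h
  push_neg at h
  have hz : 0 < k z := lt_of_le_of_ne h (Ne.symm (hno z ⟨le_refl z, hzb⟩))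
  have hsub : Ioo (k b) (k z) ⊆ k '' Ioo z b :=
    intermediate_value_Ioo' hzb hc.continuousOn
  obtain ⟨c, hc1, hc2⟩ := hsub ⟨hkb, hz⟩
  exact hno c ⟨hc1.1.le, hc1.2.le⟩ hc2

theorem stmt16 (N M D : ℕ) (hM : 2 ≤ M) (hMN : M < N) (hD : 1 ≤ D)
    (τs : ℝ) (hτs : τs ∈ Ioo (0:ℝ) 1) (heq : H1 N M τs = H2 N D τs)
    (huniq : ∀ τ ∈ Ioo (0:ℝ) 1, H1 N M τ = H2 N D τ → τ = τs)
    (x : ℕ → ℝ)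
    (hx0 : x 0 ∈ Ioo (1 - (((N:ℝ)-1)/((N:ℝ)-1+(D:ℝ))) ^ ((1:ℝ)/(D:ℝ))) 1)
    (hrec : ∀ n, x (n+1) = g N M D (x n)) :
    Filter.Tendsto x Filter.atTop (nhds τs) := by
  have hM1 : 1 ≤ M := by omega
  have hτs0 : 0 < τs := hτs.1
  have hτs1 : τs < 1 := hτs.2
  have hN3 : 3 ≤ N := by omega
  have hNR : (3:ℝ) ≤ (N:ℝ) := by exact_mod_cast hN3
  have hDR : (1:ℝ) ≤ (D:ℝ) := by exact_mod_cast hD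
  set Lv : ℝ := 1 - (((N:ℝ)-1)/((N:ℝ)-1+(D:ℝ))) ^ ((1:ℝ)/(D:ℝ)) with hLv
  set r0 : ℝ := ((N:ℝ)-1)/((N:ℝ)-1+(D:ℝ)) with hr0
  have hr0pos : 0 < r0 := div_pos (by linarith) (by linarith)
  have hr0lt : r0 < 1 := (div_lt_one (by linarith)).2 (by linarith)
  have hLpos : 0 < Lv := by
    have := Real.rpow_lt_one hr0pos.le hr0lt (by positivity : 0 < (1:ℝ)/(D:ℝ))
    simp only [hLv]
    linarith
  have hLlt1 : Lv < 1 := by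
    have := Real.rpow_pos_of_pos hr0pos ((1:ℝ)/(D:ℝ))
    simp only [hLv]
    linarith
  have hpow : (1 - Lv)^D = r0 := by
    have h1 : 1 - Lv = r0 ^ ((1:ℝ)/(D:ℝ)) := by simp only [hLv]; ring
    rw [h1, ← Real.rpow_natCast (r0 ^ ((1:ℝ)/(D:ℝ))) D, ← Real.rpow_mul hr0pos.le]
    rw [one_div, inv_mul_cancel₀ (by exact_mod_cast (by omega : D ≠ 0) : (D:ℝ) ≠ 0)]
    exact Real.rpow_one r0
  have hH2L : H2 N D Lv = 0 := by
    unfold H2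
    rw [hpow]
    have hND : ((N:ℝ)-1+(D:ℝ)) ≠ 0 := by linarith
    have h1 : (1:ℝ) - r0 = (D:ℝ)/((N:ℝ)-1+(D:ℝ)) := by
      rw [hr0]; field_simp; ring
    have h2 : (D:ℝ) / ((D:ℝ)/((N:ℝ)-1+(D:ℝ))) = (N:ℝ)-1+(D:ℝ) := by
      rw [div_div_eq_mul_div]
      field_simp
    rw [h1, h2]
    ring
  -- kfun-level uniqueness and fixed point
  have hkzero : ∀ z, 0 < z → z < 1 → kfun N M D z = 0 → z = τs := by
    intro z h1 h2 h0
    apply huniq z ⟨h1, h2⟩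
    have hs := sub_id N M D hM1 hMN hD z h1 h2
    rw [h0, zero_div] at hs
    linarith
  have hkτs : kfun N M D τs = 0 := by
    have hs := sub_id N M D hM1 hMN hD τs hτs0 hτs1
    rw [heq, sub_self] at hs
    have hden : f1 N M τs * Tq D (1-τs) ≠ 0 := by
      have := f1_pos N M hM1 hMN τs hτs0 hτs1
      have := Tq_pos D hD (1-τs) (by linarith)
      positivity
    rcases div_eq_zero_iff.mp hs.symm with h' | h'
    · exact h'
    · exact absurd h' hden
  have hgfix : g N M D τs = τs := by
    have h2 := H2_id N D hD τs hτs0 hτs1.le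
    have hpos : 0 < H2 N D τs + 1 := by
      rw [h2]
      have := Tq_pos D hD (1-τs) (by linarith)
      have := Uq_pos N D (by omega) hD (1-τs) (by linarith)
      positivity
    unfold g
    rw [heq]
    exact mul_div_cancel_right₀ τs hpos.ne'
  -- kfun at Lv is positive
  have hkL : 0 < kfun N M D Lv := by
    have hT := Tq_pos D hD (1-Lv) (by linarith)
    have hid := H2_id N D hD Lv hLpos hLlt1.le
    rw [hH2L, zero_add] at hid
    have hQ : Lv * Uq N D (1-Lv) = Tq D (1-Lv) := by
      have := (div_eq_iff hT.ne').mp hid.symm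
      linarith
    have hk : kfun N M D Lv = f2 N M Lv * Tq D (1-Lv) := by
      unfold kfun
      linear_combination (- f1 N M Lv) * hQ
    rw [hk]
    have := f2_pos N M hM hMN Lv hLpos hLlt1
    positivity
  -- sign of kfun on both sides of τs
  have hsign_left : ∀ z, Lv ≤ z → z < τs → 0 < kfun N M D z := by
    intro z h1 h2
    apply pos_of_no_zero _ (cont_kfun N M D) Lv z h1 hkL
    intro c hc hc0
    have hcpos : 0 < c := lt_of_lt_of_le hLpos hc.1
    have hclt : c < 1 := lt_of_le_of_lt (le_trans hc.2 h2.le) hτs1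
    have hcz : c = τs := hkzero c hcpos hclt hc0
    have : c < τs := lt_of_le_of_lt hc.2 h2
    linarith
  have hsign_right : ∀ z, τs < z → z < 1 → kfun N M D z < 0 := by
    intro z h1 h2
    have hkkz : kk N M D z < 0 := by
      apply neg_of_no_zero _ (cont_kk N M D) z 1 h2.le (kk_one_neg N M D hM hMN hD)
      intro c hc hc0
      rcases eq_or_lt_of_le hc.2 with h | h
      · rw [h] at hc0
        exact absurd hc0 (ne_of_lt (kk_one_neg N M D hM hMN hD))
      · have hc0' : kfun N M D c = 0 := by
          rw [kfun_eq N M D hMN, hc0]; ring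
        have hcpos : 0 < c := by linarith [hc.1]
        have hcz : c = τs := hkzero c hcpos h hc0'
        linarith [hc.1]
    have h3 : kfun N M D z = (1-z)^(N-M) * kk N M D z := kfun_eq N M D hMN z
    have h4 : (0:ℝ) < (1-z)^(N-M) := by
      have : (0:ℝ) < 1 - z := by linarith
      positivity
    nlinarith
  -- step lemmas
  have hstep_le : ∀ z, Lv < z → z ≤ τs → z ≤ g N M D z ∧ g N M D z ≤ τs := by
    intro z h1 h2
    have hz0 : 0 < z := lt_trans hLpos h1
    have hz1 : z < 1 := lt_of_le_of_lt h2 hτs1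
    constructor
    · rcases eq_or_lt_of_le h2 with h | h
      · rw [h, hgfix]
      · have hk := hsign_left z h1.le h
        have hg := gsub_id N M D hM1 hMN hD z hz0 hz1
        have hden : 0 < f1 N M z * Uq N D (1-z) := by
          have := f1_pos N M hM1 hMN z hz0 hz1
          have := Uq_pos N D (by omega) hD (1-z) (by linarith)
          positivity
        have := div_pos hk hden
        linarith
    · calc g N M D z ≤ g N M D τs := g_mono_le N M D hM hMN hD hz0 h2 hτs1
        _ = τs := hgfix
  have hstep_ge : ∀ z, τs ≤ z → z < 1 → g N M D z ≤ z ∧ τs ≤ g N M D z := by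
    intro z h1 h2
    have hz0 : 0 < z := lt_of_lt_of_le hτs0 h1
    constructor
    · rcases eq_or_lt_of_le h1 with h | h
      · rw [← h, hgfix]
      · have hk := hsign_right z h h2
        have hg := gsub_id N M D hM1 hMN hD z hz0 h2
        have hden : 0 < f1 N M z * Uq N D (1-z) := by
          have := f1_pos N M hM1 hMN z hz0 h2
          have := Uq_pos N D (by omega) hD (1-z) (by linarith)
          positivity
        have := div_neg_of_neg_of_pos hk hden
        linarith
    · calc τs = g N M D τs := hgfix.symm
        _ ≤ g N M D z := g_mono_le N M D hM hMN hD hτs0 h1 h2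
  -- continuity of g at interior points
  have hgcont : ∀ c : ℝ, 0 < c → c < 1 → ContinuousAt (g N M D) c := by
    intro c hc0 hc1
    have hden : f1 N M c * Uq N D (1-c) ≠ 0 := by
      have := f1_pos N M hM1 hMN c hc0 hc1
      have := Uq_pos N D (by omega) hD (1-c) (by linarith)
      positivity
    have hΦ : ContinuousAt
        (fun z => (f1 N M z + f2 N M z) * Tq D (1-z) / (f1 N M z * Uq N D (1-z))) c := by
      apply ContinuousAt.div
      · exact (((cont_f1 N M).add (cont_f2 N M)).mul (cont_Tq D)).continuousAt
      · exact ((cont_f1 N M).mul (cont_Uq N D)).continuousAt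
      · exact hden
    apply hΦ.congr
    filter_upwards [Ioo_mem_nhds hc0 hc1] with z hz
    exact (g_id N M D hM1 hMN hD z hz.1 hz.2).symm
  -- fixed point of g in (0,1) must be τs
  have hfix_eq : ∀ c : ℝ, 0 < c → c < 1 → g N M D c = c → c = τs := by
    intro c hc0 hc1 hfix
    have hg := gsub_id N M D hM1 hMN hD c hc0 hc1
    rw [hfix, sub_self] at hg
    have hden : f1 N M c * Uq N D (1-c) ≠ 0 := by
      have := f1_pos N M hM1 hMN c hc0 hc1
      have := Uq_pos N D (by omega) hD (1-c) (by linarith)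
      positivity
    have hk0 : kfun N M D c = 0 := by
      rcases div_eq_zero_iff.mp hg.symm with h' | h'
      · exact h'
      · exact absurd h' hden
    exact hkzero c hc0 hc1 hk0
  have hx01 : x 0 < 1 := hx0.2
  have hx0L : Lv < x 0 := hx0.1
  rcases le_or_gt (x 0) τs with hcase | hcase
  · -- increasing case
    have hbounds : ∀ n, x 0 ≤ x n ∧ x n ≤ τs := by
      intro n
      induction n with
      | zero => exact ⟨le_refl _, hcase⟩
      | succ n ih =>
        have h1 : Lv < x n := lt_of_lt_of_le hx0L ih.1
        have hs := hstep_le (x n) h1 ih.2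
        rw [hrec n]
        exact ⟨le_trans ih.1 hs.1, hs.2⟩
    have hmono : Monotone x := by
      apply monotone_nat_of_le_succ
      intro n
      rw [hrec n]
      exact (hstep_le (x n) (lt_of_lt_of_le hx0L (hbounds n).1) (hbounds n).2).1
    have hbdd : BddAbove (Set.range x) := ⟨τs, by rintro _ ⟨n, rfl⟩; exact (hbounds n).2⟩
    have hconv := tendsto_atTop_ciSup hmono hbdd
    have hcge : x 0 ≤ ⨆ n, x n := le_ciSup hbdd 0
    have hcle : (⨆ n, x n) ≤ τs := ciSup_le fun n => (hbounds n).2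
    have hc0 : 0 < ⨆ n, x n := lt_of_lt_of_le (lt_trans hLpos hx0L) hcge
    have hc1 : (⨆ n, x n) < 1 := lt_of_le_of_lt hcle hτs1
    have hfix : g N M D (⨆ n, x n) = ⨆ n, x n := by
      have h1 : Filter.Tendsto (fun n => x (n+1)) Filter.atTop (nhds (⨆ n, x n)) :=
        hconv.comp (Filter.tendsto_add_atTop_nat 1)
      have h2 : Filter.Tendsto (fun n => g N M D (x n)) Filter.atTop
          (nhds (g N M D (⨆ n, x n))) := (hgcont _ hc0 hc1).tendsto.comp hconv
      have h3 : (fun n => x (n+1)) = fun n => g N M D (x n) := funext hrec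
      rw [h3] at h1
      exact tendsto_nhds_unique h2 h1
    have : (⨆ n, x n) = τs := hfix_eq _ hc0 hc1 hfix
    rw [← this]
    exact hconv
  · -- decreasing case
    have hbounds : ∀ n, τs ≤ x n ∧ x n ≤ x 0 := by
      intro n
      induction n with
      | zero => exact ⟨hcase.le, le_refl _⟩
      | succ n ih =>
        have h2 : x n < 1 := lt_of_le_of_lt ih.2 hx01
        have hs := hstep_ge (x n) ih.1 h2
        rw [hrec n]
        exact ⟨hs.2, le_trans hs.1 ih.2⟩
    have hmono : Antitone x := by
      apply antitone_nat_of_succ_le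
      intro n
      rw [hrec n]
      exact (hstep_ge (x n) (hbounds n).1 (lt_of_le_of_lt (hbounds n).2 hx01)).1
    have hbdd : BddBelow (Set.range x) := ⟨τs, by rintro _ ⟨n, rfl⟩; exact (hbounds n).1⟩
    have hconv := tendsto_atTop_ciInf hmono hbdd
    have hcge : (⨅ n, x n) ≤ x 0 := ciInf_le hbdd 0
    have hcle : τs ≤ ⨅ n, x n := le_ciInf fun n => (hbounds n).1
    have hc0 : 0 < ⨅ n, x n := lt_of_lt_of_le hτs0 hcle
    have hc1 : (⨅ n, x n) < 1 := lt_of_le_of_lt hcge hx01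
    have hfix : g N M D (⨅ n, x n) = ⨅ n, x n := by
      have h1 : Filter.Tendsto (fun n => x (n+1)) Filter.atTop (nhds (⨅ n, x n)) :=
        hconv.comp (Filter.tendsto_add_atTop_nat 1)
      have h2 : Filter.Tendsto (fun n => g N M D (x n)) Filter.atTop
          (nhds (g N M D (⨅ n, x n))) := (hgcont _ hc0 hc1).tendsto.comp hconv
      have h3 : (fun n => x (n+1)) = fun n => g N M D (x n) := funext hrec
      rw [h3] at h1
      exact tendsto_nhds_unique h2 h1
    have : (⨅ n, x n) = τs := hfix_eq _ hc0 hc1 hfix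
    rw [← this]
    exact hconv
end

section
/- Let N, M, D be integers with 2 ≤ M < N and D ≥ 1, and define g(x) = x(H_1(x)+1)/(H_2(x)+1) for x ∈ (0,1). Then g'(x) > 0 for every x ∈ (0,1). -/
open Finset Set

set_option maxHeartbeats 1000000

/-! ### Auxiliary lemmas -/

lemma hasDerivAt_one_sub_pow (k : ℕ) (x : ℝ) :
    HasDerivAt (fun τ : ℝ => (1-τ)^k) (-((k:ℝ) * (1-x)^(k-1))) x := by
  have h : HasDerivAt (fun τ : ℝ => 1 - τ) (-1) x := by
    simpa using (hasDerivAt_id x).const_sub 1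
  simpa [Function.comp_def] using ((hasDerivAt_pow k (1-x)).comp x h)

noncomputable def dterm (n i : ℕ) (x : ℝ) : ℝ :=
  (i:ℝ)*x^(i-1)*(1-x)^(n-i) + x^i * -(((n-i:ℕ):ℝ)*(1-x)^(n-i-1))

lemma term_deriv (n i : ℕ) (x : ℝ) :
    HasDerivAt (fun τ:ℝ => τ^i * (1-τ)^(n-i)) (dterm n i x) x :=
  (hasDerivAt_pow i x).mul (hasDerivAt_one_sub_pow (n-i) x)

lemma key_id (n i : ℕ) (hi : i < n) (x : ℝ) :
    x*(1-x) * dterm n i x = ((i:ℝ) - (n:ℝ)*x) * (x^i * (1-x)^(n-i)) := by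
  have h2 : (1-x) * (1-x)^(n-i-1) = (1-x)^(n-i) := by
    rw [← pow_succ']
    congr 1
    omega
  unfold dterm
  rcases Nat.eq_zero_or_pos i with h0 | h0
  · subst h0
    simp only [Nat.cast_zero, pow_zero, zero_mul, Nat.sub_zero, one_mul, zero_add]
    simp only [Nat.sub_zero] at h2 ⊢
    linear_combination (-(n:ℝ)*x) * h2
  · have h1 : ((n-i:ℕ):ℝ) = (n:ℝ) - (i:ℝ) := by
      rw [Nat.cast_sub hi.le]
    have h3 : x * x^(i-1) = x^i := by
      rw [← pow_succ']
      congr 1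
      omega
    rw [h1, ← h3, ← h2]
    ring

lemma cs_geom (D : ℕ) (t : ℝ) (ht : 0 ≤ t) :
    (D:ℝ)^2 * t^(D-1) ≤ (∑ k ∈ range D, t^k)^2 := by
  have h := Finset.sum_sq_le_sum_mul_sum_of_sq_eq_mul (range D)
    (r := fun _ : ℕ => Real.sqrt (t^(D-1))) (f := fun k => t^k) (g := fun k => t^(D-1-k))
    (fun i _ => pow_nonneg ht _) (fun i _ => pow_nonneg ht _)
    (fun i hi => by
      rw [Real.sq_sqrt (pow_nonneg ht _), ← pow_add]
      congr 1
      simp only [Finset.mem_range] at hi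
      omega)
  simp only [Finset.sum_const, Finset.card_range, nsmul_eq_mul] at h
  rw [Finset.sum_range_reflect (fun k => t^k)] at h
  calc (D:ℝ)^2 * t^(D-1) = ((D:ℝ) * Real.sqrt (t^(D-1)))^2 := by
        rw [mul_pow, Real.sq_sqrt (pow_nonneg ht _)]
    _ ≤ _ := by rw [sq (∑ k ∈ range D, t^k)]; simpa using h

lemma f1_hasDerivAt (N M : ℕ) (x : ℝ) :
    HasDerivAt (f1 N M) (∑ i ∈ range M, ((N-1).choose i : ℝ) * dterm (N-1) i x) x := by
  have : f1 N M = fun τ => ∑ i ∈ range M, ((N-1).choose i : ℝ) * (τ^i * (1-τ)^(N-1-i)) := by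
    funext τ; exact Finset.sum_congr rfl fun i _ => by ring
  rw [this]
  exact HasDerivAt.fun_sum fun i _ => (term_deriv (N-1) i x).const_mul _

lemma f2_hasDerivAt (N M : ℕ) (x : ℝ) :
    HasDerivAt (f2 N M) (∑ i ∈ range M, (i:ℝ) * ((N-1).choose i : ℝ) * dterm (N-1) i x) x := by
  have : f2 N M = fun τ => ∑ i ∈ range M, ((i:ℝ) * ((N-1).choose i : ℝ)) * (τ^i * (1-τ)^(N-1-i)) := by
    funext τ; exact Finset.sum_congr rfl fun i _ => by ring
  rw [this]
  have := HasDerivAt.fun_sum (u := range M)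
    (A' := fun i => ((i:ℝ) * ((N-1).choose i : ℝ)) * dterm (N-1) i x)
    fun i _ => (term_deriv (N-1) i x).const_mul ((i:ℝ) * ((N-1).choose i : ℝ))
  simpa [mul_assoc] using this

lemma variance_ineq (M : ℕ) (hM : 2 ≤ M) (w : ℕ → ℝ) (hw : ∀ i, 0 ≤ w i) :
    w 0 * w 1 ≤ (∑ i ∈ range M, (i:ℝ)^2 * w i) * (∑ i ∈ range M, w i)
      - (∑ i ∈ range M, (i:ℝ) * w i)^2 := by
  have expand : ∑ i ∈ range M, ∑ j ∈ range M, w i * w j * ((i:ℝ)-(j:ℝ))^2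
      = 2 * ((∑ i ∈ range M, (i:ℝ)^2 * w i) * (∑ i ∈ range M, w i)
        - (∑ i ∈ range M, (i:ℝ) * w i)^2) := by
    have step : ∀ i j : ℕ, w i * w j * ((i:ℝ)-(j:ℝ))^2
        = ((i:ℝ)^2*w i)*(w j) - (2*((i:ℝ)*w i))*((j:ℝ)*w j) + (w i)*((j:ℝ)^2*w j) := by
      intro i j; ring
    simp_rw [step, Finset.sum_add_distrib, Finset.sum_sub_distrib,
      ← Finset.sum_mul_sum]
    rw [← Finset.mul_sum]
    ring
  have inner_nonneg : ∀ i j : ℕ, 0 ≤ w i * w j * ((i:ℝ)-(j:ℝ))^2 := by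
    intro i j; exact mul_nonneg (mul_nonneg (hw i) (hw j)) (sq_nonneg _)
  have h0m : 0 ∈ range M := by simp; omega
  have h1m : 1 ∈ range M := by simp; omega
  have big : w 0 * w 1 * (((0:ℝ)-(1:ℝ))^2) + w 1 * w 0 * (((1:ℝ)-(0:ℝ))^2)
      ≤ ∑ i ∈ range M, ∑ j ∈ range M, w i * w j * ((i:ℝ)-(j:ℝ))^2 := by
    have t0 : w 0 * w 1 * (((0:ℕ):ℝ)-((1:ℕ):ℝ))^2 ≤ ∑ j ∈ range M, w 0 * w j * (((0:ℕ):ℝ)-(j:ℝ))^2 :=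
      Finset.single_le_sum (fun j _ => inner_nonneg 0 j) h1m
    have t1 : w 1 * w 0 * (((1:ℕ):ℝ)-((0:ℕ):ℝ))^2 ≤ ∑ j ∈ range M, w 1 * w j * (((1:ℕ):ℝ)-(j:ℝ))^2 :=
      Finset.single_le_sum (fun j _ => inner_nonneg 1 j) h0m
    have outer : ∑ i ∈ ({0,1} : Finset ℕ), ∑ j ∈ range M, w i * w j * ((i:ℝ)-(j:ℝ))^2
        ≤ ∑ i ∈ range M, ∑ j ∈ range M, w i * w j * ((i:ℝ)-(j:ℝ))^2 := by
      apply Finset.sum_le_sum_of_subset_of_nonneg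
      · intro a ha
        simp only [Finset.mem_insert, Finset.mem_singleton] at ha
        simp only [Finset.mem_range]
        omega
      · intro i _ _
        exact Finset.sum_nonneg fun j _ => inner_nonneg i j
    rw [Finset.sum_pair (by norm_num : (0:ℕ) ≠ 1)] at outer
    push_cast at t0 t1 outer ⊢
    linarith
  rw [expand] at big
  norm_num at big
  linarith

theorem stmt17 (N M D : ℕ) (hM : 2 ≤ M) (hMN : M < N) (hD : 1 ≤ D) :
    ∀ x ∈ Ioo (0:ℝ) 1, 0 < deriv (g N M D) x := by
  intro x hx
  obtain ⟨hx0, hx1⟩ := hx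
  have hx1' : (0:ℝ) < 1 - x := by linarith
  have hxx : (0:ℝ) < x * (1-x) := mul_pos hx0 hx1'
  have hN3 : 3 ≤ N := by omega
  -- the weights
  set w : ℕ → ℝ := fun i => ((N-1).choose i : ℝ) * x^i * (1-x)^(N-1-i) with hwdef
  have hw : ∀ i, 0 ≤ w i := by
    intro i
    simp only [hwdef]
    have h1 : (0:ℝ) ≤ x^i := pow_nonneg hx0.le i
    have h2 : (0:ℝ) ≤ (1-x)^(N-1-i) := pow_nonneg hx1'.le _
    positivity
  have hw0 : 0 < w 0 := by
    simp only [hwdef, Nat.choose_zero_right, Nat.cast_one, pow_zero, one_mul, mul_one,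
      Nat.sub_zero]
    exact pow_pos hx1' _
  have hw1 : 0 < w 1 := by
    simp only [hwdef, Nat.choose_one_right, pow_one]
    have hN1 : 0 < ((N-1:ℕ):ℝ) := by
      have : 0 < N - 1 := by omega
      exact_mod_cast this
    have := pow_pos hx1' (N-1-1)
    positivity
  have hf1x : f1 N M x = ∑ i ∈ range M, w i := rfl
  have hf2x : f2 N M x = ∑ i ∈ range M, (i:ℝ) * w i := by
    unfold f2
    exact Finset.sum_congr rfl fun i _ => by simp only [hwdef]; ring
  have hf1pos : 0 < f1 N M x := by
    rw [hf1x]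
    exact lt_of_lt_of_le hw0 (Finset.single_le_sum (fun i _ => hw i) (by simp; omega))
  have hf2nonneg : 0 ≤ f2 N M x := by
    rw [hf2x]
    exact Finset.sum_nonneg fun i _ => mul_nonneg (Nat.cast_nonneg i) (hw i)
  -- derivative identities
  have hD1 : x*(1-x) * (∑ i ∈ range M, ((N-1).choose i : ℝ) * dterm (N-1) i x)
      = f2 N M x - ((N-1:ℕ):ℝ) * x * f1 N M x := by
    rw [hf1x, hf2x, Finset.mul_sum, Finset.mul_sum, ← Finset.sum_sub_distrib]
    refine Finset.sum_congr rfl fun i hi => ?_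
    have hiN : i < N - 1 := by simp only [Finset.mem_range] at hi; omega
    have hk := key_id (N-1) i hiN x
    simp only [hwdef]
    linear_combination (((N-1).choose i : ℝ)) * hk
  have hD2 : x*(1-x) * (∑ i ∈ range M, (i:ℝ) * ((N-1).choose i : ℝ) * dterm (N-1) i x)
      = (∑ i ∈ range M, (i:ℝ)^2 * w i) - ((N-1:ℕ):ℝ) * x * f2 N M x := by
    rw [hf2x, Finset.mul_sum, Finset.mul_sum, ← Finset.sum_sub_distrib]
    refine Finset.sum_congr rfl fun i hi => ?_
    have hiN : i < N - 1 := by simp only [Finset.mem_range] at hi; omega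
    have hk := key_id (N-1) i hiN x
    simp only [hwdef]
    linear_combination ((i:ℝ) * ((N-1).choose i : ℝ)) * hk
  -- positivity of the H1 derivative numerator
  have hvar := variance_ineq M hM w hw
  have hnum : 0 < (∑ i ∈ range M, (i:ℝ) * ((N-1).choose i : ℝ) * dterm (N-1) i x) * f1 N M x
      - f2 N M x * (∑ i ∈ range M, ((N-1).choose i : ℝ) * dterm (N-1) i x) := by
    have key : x*(1-x) * ((∑ i ∈ range M, (i:ℝ) * ((N-1).choose i : ℝ) * dterm (N-1) i x) * f1 N M x
        - f2 N M x * (∑ i ∈ range M, ((N-1).choose i : ℝ) * dterm (N-1) i x))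
        = (∑ i ∈ range M, (i:ℝ)^2 * w i) * f1 N M x - (f2 N M x)^2 := by
      linear_combination (f1 N M x) * hD2 - (f2 N M x) * hD1
    have pos : 0 < x*(1-x) * ((∑ i ∈ range M, (i:ℝ) * ((N-1).choose i : ℝ) * dterm (N-1) i x) * f1 N M x
        - f2 N M x * (∑ i ∈ range M, ((N-1).choose i : ℝ) * dterm (N-1) i x)) := by
      rw [key, hf1x, hf2x]
      have := mul_pos hw0 hw1
      linarith [hvar]
    by_contra hcon
    push_neg at hcon
    nlinarith
  have hH1d : HasDerivAt (H1 N M)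
      (((∑ i ∈ range M, (i:ℝ) * ((N-1).choose i : ℝ) * dterm (N-1) i x) * f1 N M x
        - f2 N M x * (∑ i ∈ range M, ((N-1).choose i : ℝ) * dterm (N-1) i x)) / f1 N M x ^ 2) x := by
    unfold H1
    exact (f2_hasDerivAt N M x).div (f1_hasDerivAt N M x) (ne_of_gt hf1pos)
  have hH1nonneg : 0 ≤ H1 N M x := div_nonneg hf2nonneg hf1pos.le
  -- H2 side
  have htD : (1-x)^D < 1 := pow_lt_one₀ hx1'.le (by linarith) (by omega)
  have hu : 0 < 1 - (1-x)^D := by linarith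
  set P : ℝ := ∑ k ∈ range D, (1-x)^k with hPdef
  have hP1 : (1:ℝ) ≤ P := by
    have := Finset.single_le_sum (f := fun k => (1-x)^k)
      (fun k _ => pow_nonneg hx1'.le k) (show 0 ∈ range D by simp; omega)
    simpa using this
  have hPpos : 0 < P := by linarith
  have huP : 1 - (1-x)^D = x * P := by
    rw [hPdef]
    linear_combination geom_sum_mul (1-x) D
  have hPD : (D:ℝ) * (1-x)^D ≤ P := by
    rw [hPdef]
    calc (D:ℝ) * (1-x)^D = ∑ _k ∈ range D, (1-x)^D := by
          rw [Finset.sum_const, Finset.card_range, nsmul_eq_mul]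
      _ ≤ ∑ k ∈ range D, (1-x)^k := by
          refine Finset.sum_le_sum fun k hk => ?_
          exact pow_le_pow_of_le_one hx1'.le (by linarith)
            (by simp only [Finset.mem_range] at hk; omega)
  have hden_eq : H2 N D x + 1 = x*((N:ℝ)-1) + (x*(D:ℝ) + 1 - (D:ℝ)/P) := by
    unfold H2
    rw [huP]
    field_simp
    ring
  have hextra : 0 ≤ x*(D:ℝ) + 1 - (D:ℝ)/P := by
    rw [sub_nonneg, div_le_iff₀ hPpos]
    have hx' : (D:ℝ)*(x*P) = (D:ℝ)*(1-(1-x)^D) := by rw [huP]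
    nlinarith [hPD, hx']
  have hdenpos : 0 < H2 N D x + 1 := by
    rw [hden_eq]
    have hNc : (3:ℝ) ≤ (N:ℝ) := by exact_mod_cast hN3
    have hpos1 : 0 < x*((N:ℝ)-1) := mul_pos hx0 (by linarith)
    linarith
  -- derivative of the H2 part
  have hvd : HasDerivAt (fun y:ℝ => 1 - (1-y)^D) ((D:ℝ)*(1-x)^(D-1)) x := by
    simpa using (hasDerivAt_one_sub_pow D x).const_sub 1
  have hinner : HasDerivAt (fun y:ℝ => (N:ℝ)+(D:ℝ)-1 - (D:ℝ)/(1-(1-y)^D))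
      ((D:ℝ)^2*(1-x)^(D-1)/(1-(1-x)^D)^2) x := by
    have h := ((hasDerivAt_const x (D:ℝ)).div hvd (ne_of_gt hu)).const_sub ((N:ℝ)+(D:ℝ)-1)
    refine h.congr_deriv ?_
    ring
  have hH2d : HasDerivAt (H2 N D)
      (((N:ℝ)+(D:ℝ)-1 - (D:ℝ)/(1-(1-x)^D)) + x * ((D:ℝ)^2*(1-x)^(D-1)/(1-(1-x)^D)^2)) x := by
    unfold H2
    have h := (hasDerivAt_id' x).mul hinner
    refine h.congr_deriv ?_
    ring
  have hφ : HasDerivAt (fun y => y / (H2 N D y + 1))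
      ((1 - x^2*((D:ℝ)^2*(1-x)^(D-1))/(1-(1-x)^D)^2) / (H2 N D x + 1)^2) x := by
    have h := (hasDerivAt_id' x).div (hH2d.add_const 1) (ne_of_gt hdenpos)
    refine h.congr_deriv ?_
    unfold H2
    ring
  have hCS := cs_geom D (1-x) hx1'.le
  have hNUM : 0 ≤ 1 - x^2*((D:ℝ)^2*(1-x)^(D-1))/(1-(1-x)^D)^2 := by
    rw [sub_nonneg]
    have hle : x^2*((D:ℝ)^2*(1-x)^(D-1)) ≤ (1-(1-x)^D)^2 := by
      rw [huP, mul_pow]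
      nlinarith [hCS, sq_nonneg x]
    exact div_le_one_of_le₀ hle (sq_nonneg _)
  have hφpos : 0 < x / (H2 N D x + 1) := div_pos hx0 hdenpos
  -- assemble
  have hgeq : g N M D = fun y => (H1 N M y + 1) * (y / (H2 N D y + 1)) := by
    funext y
    unfold g
    rw [mul_comm y, mul_div_assoc]
  have hgd : HasDerivAt (g N M D)
      ((((∑ i ∈ range M, (i:ℝ) * ((N-1).choose i : ℝ) * dterm (N-1) i x) * f1 N M x
        - f2 N M x * (∑ i ∈ range M, ((N-1).choose i : ℝ) * dterm (N-1) i x)) / f1 N M x ^ 2)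
          * (x / (H2 N D x + 1))
        + (H1 N M x + 1)
          * ((1 - x^2*((D:ℝ)^2*(1-x)^(D-1))/(1-(1-x)^D)^2) / (H2 N D x + 1)^2)) x := by
    rw [hgeq]
    exact (hH1d.add_const 1).mul hφ
  rw [hgd.deriv]
  have A1 : 0 < ((∑ i ∈ range M, (i:ℝ) * ((N-1).choose i : ℝ) * dterm (N-1) i x) * f1 N M x
      - f2 N M x * (∑ i ∈ range M, ((N-1).choose i : ℝ) * dterm (N-1) i x)) / f1 N M x ^ 2 :=
    div_pos hnum (pow_pos hf1pos 2)
  have A3 : 0 ≤ (H1 N M x + 1)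
      * ((1 - x^2*((D:ℝ)^2*(1-x)^(D-1))/(1-(1-x)^D)^2) / (H2 N D x + 1)^2) :=
    mul_nonneg (by linarith) (div_nonneg hNUM (sq_nonneg _))
  have := mul_pos A1 hφpos
  linarith
end
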